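/- Let E, Ẽ be finite-dimensional complex vector spaces, A,B linear operators on E and Ã,B̃ on Ẽ. Define the operator quintuple L_{A,B} = (E⊕E; {(x,0) : x∈E}, {(0,x) : x∈E}, {(x,x) : x∈E}, {(x,Ax) : x∈E}, {(x,Bx) : x∈E}), and similarly L_{Ã,B̃}. Then L_{A,B} is isomorphic (as a system of subspaces) to L_{Ã,B̃} if and only if there exists an invertible linear map T : Ẽ → E with à = T⁻¹AT and B̃ = T⁻¹BT. -/

import Mathlib

/-- The operator quintuple L_{A,B} of subspaces of E ⊕ E. -/
def operatorQuintuple {E : Type*} [AddCommGroup E] [Module ℂ E]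
    (A B : E →ₗ[ℂ] E) : Fin 5 → Submodule ℂ (E × E) :=
  ![(⊤ : Submodule ℂ E).prod (⊥ : Submodule ℂ E),
    (⊥ : Submodule ℂ E).prod (⊤ : Submodule ℂ E),
    LinearMap.graph (LinearMap.id : E →ₗ[ℂ] E),
    LinearMap.graph A,
    LinearMap.graph B]

/-- L_{A,B} ≅ L_{Ã,B̃} iff (A,B) and (Ã,B̃) are simultaneously
similar. -/
theorem operatorQuintuple_iso_iff
    (E E' : Type*) [AddCommGroup E] [Module ℂ E] [FiniteDimensional ℂ E]
    [AddCommGroup E'] [Module ℂ E'] [FiniteDimensional ℂ E']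
    (A B : E →ₗ[ℂ] E) (A' B' : E' →ₗ[ℂ] E') :
    (∃ R : (E × E) ≃ₗ[ℂ] (E' × E'),
        ∀ i, (operatorQuintuple A B i).map R.toLinearMap = operatorQuintuple A' B' i) ↔
    (∃ T : E' ≃ₗ[ℂ] E,
        A' = T.symm.toLinearMap ∘ₗ A ∘ₗ T.toLinearMap ∧
        B' = T.symm.toLinearMap ∘ₗ B ∘ₗ T.toLinearMap) := by
  constructor
  · rintro ⟨R, hR⟩
    -- second component of R (x,0) is 0
    have h0 : ∀ x : E, (R (x, 0)).2 = 0 := by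
      intro x
      have : R (x, 0) ∈ operatorQuintuple A' B' 0 := by
        rw [← hR 0]
        exact Submodule.mem_map_of_mem (by simp [operatorQuintuple])
      simpa [operatorQuintuple] using this
    have h1 : ∀ y : E, (R (0, y)).1 = 0 := by
      intro y
      have : R (0, y) ∈ operatorQuintuple A' B' 1 := by
        rw [← hR 1]
        exact Submodule.mem_map_of_mem (by simp [operatorQuintuple])
      simpa [operatorQuintuple] using this
    -- the map f : E → E'
    set f : E →ₗ[ℂ] E' :=
      LinearMap.fst ℂ E' E' ∘ₗ R.toLinearMap ∘ₗ LinearMap.inl ℂ E E with hf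
    have hRx : ∀ x : E, R (x, 0) = (f x, 0) := by
      intro x
      ext
      · simp [hf]
      · simpa using h0 x
    have hfbij : Function.Bijective f := by
      constructor
      · intro a b hab
        have : R (a, 0) = R (b, 0) := by rw [hRx a, hRx b, hab]
        have := R.injective this
        exact congrArg Prod.fst this
      · intro x'
        have : (x', (0 : E')) ∈ operatorQuintuple A' B' 0 := by
          simp [operatorQuintuple]
        rw [← hR 0] at this
        obtain ⟨⟨a, b⟩, hab, habe⟩ := this
        have hb : b = 0 := by simpa [operatorQuintuple, eq_comm] using hab
        subst hb
        exact ⟨a, by rw [show (R : (E × E) →ₗ[ℂ] E' × E') (a,0) = R (a,0) from rfl, hRx a] at habe; exact congrArg Prod.fst habe⟩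
    -- second component: R (0, y) = (0, f y) using the diagonal
    have hRy : ∀ y : E, R (0, y) = (0, f y) := by
      intro y
      have hdiag : R (y, y) ∈ operatorQuintuple A' B' 2 := by
        rw [← hR 2]
        exact Submodule.mem_map_of_mem (by simp [operatorQuintuple, LinearMap.mem_graph_iff])
      have h2 : (R (y, y)).2 = (R (y, y)).1 := by
        simpa [operatorQuintuple, LinearMap.mem_graph_iff] using hdiag
      have hsplit : R (y, y) = R (y, 0) + R (0, y) := by
        rw [← R.map_add]; norm_num
      ext
      · simpa using h1 y
      · have e1 : (R (y, y)).1 = f y := by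
          rw [hsplit]; simp [hRx y, h1 y]
        have e2 : (R (y, y)).2 = (R (0, y)).2 := by
          rw [hsplit]; simp [hRx y]
        simp [← e2, h2, e1]
    -- intertwining
    have hA : ∀ x : E, A' (f x) = f (A x) := by
      intro x
      have : R (x, A x) ∈ operatorQuintuple A' B' 3 := by
        rw [← hR 3]
        exact Submodule.mem_map_of_mem (by simp [operatorQuintuple, LinearMap.mem_graph_iff])
      have hsplit : R (x, A x) = (f x, f (A x)) := by
        have : R (x, A x) = R (x, 0) + R (0, A x) := by rw [← R.map_add]; norm_num
        rw [this, hRx, hRy]; simp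
      rw [hsplit] at this
      simpa [operatorQuintuple, LinearMap.mem_graph_iff] using this.symm
    have hB : ∀ x : E, B' (f x) = f (B x) := by
      intro x
      have : R (x, B x) ∈ operatorQuintuple A' B' 4 := by
        rw [← hR 4]
        exact Submodule.mem_map_of_mem (by simp [operatorQuintuple, LinearMap.mem_graph_iff])
      have hsplit : R (x, B x) = (f x, f (B x)) := by
        have : R (x, B x) = R (x, 0) + R (0, B x) := by rw [← R.map_add]; norm_num
        rw [this, hRx, hRy]; simp
      rw [hsplit] at this
      simpa [operatorQuintuple, LinearMap.mem_graph_iff] using this.symm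
    refine ⟨(LinearEquiv.ofBijective f hfbij).symm, ?_, ?_⟩
    · ext x'
      simp only [LinearMap.comp_apply, LinearEquiv.coe_coe, LinearEquiv.symm_symm]
      have := hA ((LinearEquiv.ofBijective f hfbij).symm x')
      simpa [eq_comm] using this.symm
    · ext x'
      simp only [LinearMap.comp_apply, LinearEquiv.coe_coe, LinearEquiv.symm_symm]
      have := hB ((LinearEquiv.ofBijective f hfbij).symm x')
      simpa [eq_comm] using this.symm
  · rintro ⟨T, hA, hB⟩
    refine ⟨LinearEquiv.prodCongr T.symm T.symm, fun i => ?_⟩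
    have hA' : ∀ x : E, A' (T.symm x) = T.symm (A x) := by
      intro x; rw [hA]; simp
    have hB' : ∀ x : E, B' (T.symm x) = T.symm (B x) := by
      intro x; rw [hB]; simp
    fin_cases i <;>
      · ext ⟨a, b⟩
        constructor
        · rintro ⟨⟨x, y⟩, hxy, hab⟩
          simp only [operatorQuintuple, Matrix.cons_val_zero, Matrix.cons_val_one,
            Matrix.head_cons, Submodule.mem_prod, Submodule.mem_top, Submodule.mem_bot,
            LinearMap.mem_graph_iff, Matrix.cons_val_two, Matrix.tail_cons,
            Matrix.cons_val_three, Matrix.cons_val_four, LinearMap.id_apply] at hxy ⊢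
          simp only [LinearEquiv.prodCongr_apply, LinearEquiv.coe_coe, Prod.map] at hab
          obtain ⟨rfl, rfl⟩ := Prod.mk.injEq .. ▸ Prod.ext_iff.mp hab
          simp_all
        · intro hab
          simp only [operatorQuintuple, Matrix.cons_val_zero, Matrix.cons_val_one,
            Matrix.head_cons, Submodule.mem_prod, Submodule.mem_top, Submodule.mem_bot,
            LinearMap.mem_graph_iff, Matrix.cons_val_two, Matrix.tail_cons,
            Matrix.cons_val_three, Matrix.cons_val_four, LinearMap.id_apply] at hab
          refine ⟨(T a, T b), ?_, by simp⟩
          simp only [operatorQuintuple, Matrix.cons_val_zero, Matrix.cons_val_one,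
            Matrix.head_cons, Submodule.mem_prod, Submodule.mem_top, Submodule.mem_bot,
            LinearMap.mem_graph_iff, Matrix.cons_val_two, Matrix.tail_cons,
            Matrix.cons_val_three, Matrix.cons_val_four, LinearMap.id_apply]
          simp_all
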